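/- There are infinitely many n ∈ ℕ with h_n > h_{n+1} > h_{n+2} > h_{n+3}. -/
import Mathlib


def t (n : ℕ) : ℤ := (-1) ^ ((Nat.digits 2 n).sum)

def h : ℕ → ℤ
  | 0 => 0
  | 1 => 1
  | (n + 2) => t (n + 2) * h (n + 1) + h n

/-- 2x2 integer matrices as quadruples (a,b,c,d) = [[a,b],[c,d]] -/
abbrev Q4 := ℤ × ℤ × ℤ × ℤ

def qmul (x y : Q4) : Q4 :=
  (x.1 * y.1 + x.2.1 * y.2.2.1, x.1 * y.2.1 + x.2.1 * y.2.2.2,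
   x.2.2.1 * y.1 + x.2.2.2 * y.2.2.1, x.2.2.1 * y.2.1 + x.2.2.2 * y.2.2.2)

def Mq (e : ℤ) : Q4 := (e, 1, 1, 0)

def Qs (n : ℕ) : ℕ → Q4
  | 0 => (1, 0, 0, 1)
  | (r + 1) => qmul (Mq (t (n + r + 1))) (Qs n r)

def Sm : ℕ → ℤ → Q4
  | 0, _ => (1, 0, 0, 1)
  | (k + 1), e => qmul (Sm k (-e)) (qmul (Mq (-e)) (Sm k e))

lemma qmul_assoc (x y z : Q4) : qmul (qmul x y) z = qmul x (qmul y z) := by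
  obtain ⟨a, b, c, d⟩ := x
  obtain ⟨e, f, g, i⟩ := y
  obtain ⟨p, q, r, s⟩ := z
  simp only [qmul, Prod.mk.injEq]
  refine ⟨by ring, by ring, by ring, by ring⟩

lemma one_qmul (x : Q4) : qmul (1, 0, 0, 1) x = x := by
  obtain ⟨a, b, c, d⟩ := x
  simp [qmul]

lemma Qs_add (n r s : ℕ) : Qs n (r + s) = qmul (Qs (n + r) s) (Qs n r) := by
  induction s with
  | zero => simp [Qs, one_qmul]
  | succ s ih =>
      show Qs n ((r + s) + 1) = _
      rw [Qs, ih, ← qmul_assoc, show n + (r + s) + 1 = (n + r) + s + 1 from by omega]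
      rfl

lemma t_two_mul (n : ℕ) : t (2 * n) = t n := by
  rcases Nat.eq_zero_or_pos n with hn | hn
  · simp [hn]
  · unfold t
    rw [Nat.digits_def' (by norm_num : 1 < 2) (by omega : 0 < 2 * n)]
    simp [Nat.mul_div_cancel_left _ (by norm_num : 0 < 2)]

lemma t_two_mul_add_one (n : ℕ) : t (2 * n + 1) = - t n := by
  unfold t
  rw [Nat.digits_def' (by norm_num : 1 < 2) (by omega : 0 < 2 * n + 1)]
  have h1 : (2 * n + 1) % 2 = 1 := by omega
  have h2 : (2 * n + 1) / 2 = n := by omega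
  rw [h1, h2, List.sum_cons, pow_add]
  ring

lemma t_zero : t 0 = 1 := by simp [t]

lemma t_one : t 1 = -1 := by
  have := t_two_mul_add_one 0
  simpa [t_zero] using this

lemma t_two : t 2 = -1 := by
  have := t_two_mul 1
  simpa [t_one] using this

lemma tm : ∀ k j : ℕ, j < 2 ^ k → t (2 ^ k + j) = - t j := by
  intro k
  induction k with
  | zero =>
      intro j hj
      interval_cases j
      simpa [t_zero] using t_one
  | succ k ih =>
      intro j hj
      have hp : 2 ^ (k + 1) = 2 * 2 ^ k := by rw [pow_succ]; ring
      rcases Nat.even_or_odd j with ⟨m, hm⟩ | ⟨m, hm⟩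
      · have hm' : m < 2 ^ k := by omega
        have e1 : 2 ^ (k + 1) + j = 2 * (2 ^ k + m) := by omega
        rw [e1, t_two_mul, ih m hm', hm]
        rw [show m + m = 2 * m by ring, t_two_mul]
      · have hm' : m < 2 ^ k := by omega
        have e1 : 2 ^ (k + 1) + j = 2 * (2 ^ k + m) + 1 := by omega
        rw [e1, t_two_mul_add_one, ih m hm', hm, t_two_mul_add_one]

lemma hQ : ∀ m : ℕ, h m = (Qs 0 (m + 1)).2.2.2 ∧ h (m + 1) = (Qs 0 (m + 1)).2.1 := by
  intro m
  induction m with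
  | zero =>
      show h 0 = (Qs 0 1).2.2.2 ∧ h 1 = (Qs 0 1).2.1
      simp [Qs, qmul, Mq, t_one, h]
  | succ m ih =>
      obtain ⟨ih1, ih2⟩ := ih
      have e : Qs 0 (m + 2) = qmul (Mq (t (m + 2))) (Qs 0 (m + 1)) := by
        show Qs 0 ((m + 1) + 1) = _
        rw [Qs]
        congr 3
        omega
      constructor
      · rw [e]
        simp only [qmul, Mq]
        simpa using ih2
      · rw [e]
        simp only [qmul, Mq]
        rw [h]
        rw [ih1, ih2]
        ring

lemma Sprod : ∀ k : ℕ, ∀ e : ℤ, ∀ n : ℕ, (e = 1 ∨ e = -1) →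
    (∀ i : ℕ, 1 ≤ i → i < 2 ^ k → t (n + i) = e * t i) →
    Qs n (2 ^ k - 1) = Sm k e := by
  intro k
  induction k with
  | zero => intro e n _ _; simp [Qs, Sm]
  | succ k ih =>
      intro e n he hyp
      have h1 : 1 ≤ 2 ^ k := Nat.one_le_two_pow
      have hp : 2 ^ (k + 1) = 2 * 2 ^ k := by rw [pow_succ]; ring
      have e1 : 2 ^ (k + 1) - 1 = 2 ^ k + (2 ^ k - 1) := by omega
      rw [e1, Qs_add]
      have e2 : Qs n (2 ^ k) = qmul (Mq (t (n + 2 ^ k))) (Qs n (2 ^ k - 1)) := by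
        rw [show 2 ^ k = (2 ^ k - 1) + 1 by omega, Qs]
        congr 3
        omega
      have ht2k : t (2 ^ k) = -1 := by
        have := tm k 0 (by omega)
        simpa [t_zero] using this
      have htn : t (n + 2 ^ k) = -e := by
        rw [hyp (2 ^ k) h1 (by omega), ht2k]; ring
      have hfirst : Qs (n + 2 ^ k) (2 ^ k - 1) = Sm k (-e) := by
        apply ih (-e) (n + 2 ^ k)
        · rcases he with he | he <;> simp [he]
        · intro i hi1 hi2
          have : t (n + (2 ^ k + i)) = e * t (2 ^ k + i) :=
            hyp (2 ^ k + i) (by omega) (by omega)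
          rw [← Nat.add_assoc] at this
          rw [this, tm k i hi2]
          ring
      have hsecond : Qs n (2 ^ k - 1) = Sm k e := ih e n he (fun i hi1 hi2 => hyp i hi1 (by omega))
      rw [e2, htn, hfirst, hsecond, ← qmul_assoc]
      rw [Sm, qmul_assoc]

lemma hSm (K : ℕ) (hK : 1 ≤ K) :
    h (2 ^ K - 1) = (Sm K 1).2.1 ∧ h (2 ^ K - 2) = (Sm K 1).2.2.2 := by
  have h2 : 2 ≤ 2 ^ K := by
    calc 2 = 2 ^ 1 := by norm_num
    _ ≤ 2 ^ K := Nat.pow_le_pow_right (by norm_num) hK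
  have hq : Qs 0 (2 ^ K - 1) = Sm K 1 := by
    apply Sprod K 1 0 (Or.inl rfl)
    intro i _ _
    simp
  have := hQ (2 ^ K - 2)
  rw [show 2 ^ K - 2 + 1 = 2 ^ K - 1 by omega, hq] at this
  exact ⟨this.2, this.1⟩

lemma stepEO (k : ℕ) (a b c d : ℤ) (h1 : Sm k 1 = (a, b, c, d))
    (h2 : Sm k (-1) = (-a, b, c, -d)) (ha : 1 ≤ a) (hc : 3 * a ≤ c)
    (hd : d = a - c) (he : c * (a + b) = a ^ 2 + 1) :
    ∃ a' b' c' d' : ℤ, Sm (k + 1) 1 = (a', b', c', d') ∧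
      Sm (k + 1) (-1) = (-a', b', c', -d') ∧ a' ≤ -1 ∧ -3 * a' ≤ c' ∧
      d' = -a' - c' ∧ c' * (a' + b') = 1 - a' ^ 2 := by
  subst hd
  refine ⟨a * (a + b - c), a * b + b * b - a * (a - c), c * c - a * c - a * (a - c),
    c * (a - c) - c * b - (a - c) * b, ?_, ?_, ?_, ?_, ?_, ?_⟩
  · rw [Sm, h1, h2]
    simp only [qmul, Mq, Prod.mk.injEq]
    refine ⟨by ring, by ring, by ring, by ring⟩
  · rw [show Sm (k+1) (-1) = qmul (Sm k (-(-1))) (qmul (Mq (-(-1))) (Sm k (-1))) from rfl]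
    rw [neg_neg, h1, h2]
    simp only [qmul, Mq, Prod.mk.injEq]
    refine ⟨by ring, by ring, by ring, by ring⟩
  · -- a' ≤ -1
    have hcpos : 0 < c := by nlinarith
    have haux : a + b - c ≤ -1 := by nlinarith [sq_nonneg a, sq_nonneg c]
    nlinarith
  · -- -3a' ≤ c'
    have hcpos : 0 < c := by nlinarith
    have hkey : c * ((c * c - a * c - a * (a - c)) + 3 * (a * (a + b - c)))
        = (c - 3 * a) * ((c - a) * (c + a)) + 3 * a := by linear_combination 3 * a * he
    nlinarith [mul_nonneg (mul_nonneg (by linarith : (0:ℤ) ≤ c - 3 * a)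
      (by linarith : (0:ℤ) ≤ c - a)) (by linarith : (0:ℤ) ≤ c + a)]
  · ring
  · -- det relation
    have hdet : a * (a - c) - b * c = -1 := by linear_combination -he
    nlinarith [hdet, he]

lemma stepOE (k : ℕ) (a b c d : ℤ) (h1 : Sm k 1 = (a, b, c, d))
    (h2 : Sm k (-1) = (-a, b, c, -d)) (ha : a ≤ -1) (hc : -3 * a ≤ c)
    (hd : d = -a - c) (he : c * (a + b) = 1 - a ^ 2) :
    ∃ a' b' c' d' : ℤ, Sm (k + 1) 1 = (a', b', c', d') ∧
      Sm (k + 1) (-1) = (-a', b', c', -d') ∧ 1 ≤ a' ∧ 3 * a' ≤ c' ∧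
      d' = a' - c' ∧ c' * (a' + b') = a' ^ 2 + 1 := by
  subst hd
  refine ⟨a * (a + b - c), a * b + b * b - a * (-a - c), c * c - a * c - a * (-a - c),
    c * (-a - c) - c * b - (-a - c) * b, ?_, ?_, ?_, ?_, ?_, ?_⟩
  · rw [Sm, h1, h2]
    simp only [qmul, Mq, Prod.mk.injEq]
    refine ⟨by ring, by ring, by ring, by ring⟩
  · rw [show Sm (k+1) (-1) = qmul (Sm k (-(-1))) (qmul (Mq (-(-1))) (Sm k (-1))) from rfl]
    rw [neg_neg, h1, h2]
    simp only [qmul, Mq, Prod.mk.injEq]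
    refine ⟨by ring, by ring, by ring, by ring⟩
  · -- 1 ≤ a'
    have hcpos : 0 < c := by nlinarith
    have haux : a + b - c ≤ -1 := by nlinarith [sq_nonneg a]
    nlinarith
  · -- 3a' ≤ c'
    have hcpos : 0 < c := by nlinarith
    have hkey : c * ((c * c - a * c - a * (-a - c)) - 3 * (a * (a + b - c)))
        = (c + 3 * a) * (c * c + a * a) - 3 * a := by linear_combination -3 * a * he
    nlinarith [mul_nonneg (by linarith : (0:ℤ) ≤ c + 3 * a)
      (by nlinarith : (0:ℤ) ≤ c * c + a * a)]
  · ring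
  · -- det relation
    have hdet : a * (-a - c) - b * c = -1 := by linear_combination -he
    nlinarith [hdet, he]

lemma inv : ∀ j : ℕ, ∃ a b c d : ℤ, Sm (2 * (j + 2)) 1 = (a, b, c, d) ∧
    Sm (2 * (j + 2)) (-1) = (-a, b, c, -d) ∧ 1 ≤ a ∧ 3 * a ≤ c ∧
    d = a - c ∧ c * (a + b) = a ^ 2 + 1 := by
  intro j
  induction j with
  | zero =>
      refine ⟨3, -2, 10, -7, ?_, ?_, by norm_num, by norm_num, by norm_num, by norm_num⟩
      · show Sm 4 1 = _
        norm_num [Sm, qmul, Mq]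
      · show Sm 4 (-1) = _
        norm_num [Sm, qmul, Mq]
  | succ j ih =>
      obtain ⟨a, b, c, d, h1, h2, ha, hc, hd, he⟩ := ih
      obtain ⟨a', b', c', d', h1', h2', ha', hc', hd', he'⟩ :=
        stepEO (2 * (j + 2)) a b c d h1 h2 ha hc hd he
      obtain ⟨a'', b'', c'', d'', h1'', h2'', ha'', hc'', hd'', he''⟩ :=
        stepOE (2 * (j + 2) + 1) a' b' c' d' h1' h2' ha' hc' hd' he'
      refine ⟨a'', b'', c'', d'', ?_, ?_, ha'', hc'', hd'', he''⟩
      · rw [show 2 * (j + 1 + 2) = 2 * (j + 2) + 1 + 1 by ring]; exact h1''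
      · rw [show 2 * (j + 1 + 2) = 2 * (j + 2) + 1 + 1 by ring]; exact h2''

lemma h_eq (m : ℕ) (hm : 2 ≤ m) : h m = t m * h (m - 1) + h (m - 2) := by
  rw [show m = (m - 2) + 2 by omega, h]
  rw [show m - 2 + 2 - 1 = m - 2 + 1 by omega, show m - 2 + 2 - 2 = m - 2 by omega]

theorem stmt10 : {n : ℕ | h n > h (n + 1) ∧ h (n + 1) > h (n + 2) ∧ h (n + 2) > h (n + 3)}.Infinite := by
  apply Set.infinite_of_injective_forall_mem
    (f := fun j : ℕ => 2 ^ (2 * (j + 2)) - 1)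
  · intro x y hxy
    simp only at hxy
    have h1 : (1:ℕ) < 2 := by norm_num
    by_contra hne
    rcases Nat.lt_or_ge x y with hl | hg
    · have := Nat.pow_lt_pow_right h1 (show 2 * (x + 2) < 2 * (y + 2) by omega)
      have h2 : 1 ≤ 2 ^ (2 * (x + 2)) := Nat.one_le_two_pow
      omega
    · have hlt : y < x := by omega
      have := Nat.pow_lt_pow_right h1 (show 2 * (y + 2) < 2 * (x + 2) by omega)
      have h2 : 1 ≤ 2 ^ (2 * (y + 2)) := Nat.one_le_two_pow
      omega
  · intro j
    simp only [Set.mem_setOf_eq]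
    set K := 2 * (j + 2) with hKdef
    have hK1 : 1 ≤ K := by omega
    have h16 : 16 ≤ 2 ^ K := by
      calc (16:ℕ) = 2 ^ 4 := by norm_num
      _ ≤ 2 ^ K := Nat.pow_le_pow_right (by norm_num) (by omega)
    obtain ⟨a, b, c, d, h1, h2, ha, hc, hd, he⟩ := inv j
    obtain ⟨hb1, hd1⟩ := hSm K hK1
    rw [h1] at hb1 hd1
    simp only at hb1 hd1
    -- hb1 : h (2^K - 1) = b, hd1 : h (2^K - 2) = d
    have hcpos : 0 < c := by nlinarith
    have hbneg : b ≤ -1 := by nlinarith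
    have hdb : d < 2 * b := by nlinarith [mul_nonneg (by linarith : (0:ℤ) ≤ c - a) (by linarith : (0:ℤ) ≤ c - 2 * a)]
    -- index arithmetic
    have e0 : 2 ^ K - 1 + 1 = 2 ^ K := by omega
    have e1 : 2 ^ K - 1 + 2 = 2 ^ K + 1 := by omega
    have e2 : 2 ^ K - 1 + 3 = 2 ^ K + 2 := by omega
    -- h values
    have hN : h (2 ^ K) = t (2 ^ K) * h (2 ^ K - 1) + h (2 ^ K - 2) := by
      have := h_eq (2 ^ K) (by omega)
      rwa [show 2 ^ K - 1 = 2 ^ K - 1 from rfl] at this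
    have htN : t (2 ^ K) = -1 := by
      have := tm K 0 (by omega)
      simpa [t_zero] using this
    have htN1 : t (2 ^ K + 1) = 1 := by
      have := tm K 1 (by omega)
      rw [this, t_one]; ring
    have htN2 : t (2 ^ K + 2) = 1 := by
      have := tm K 2 (by omega)
      rw [this, t_two]; ring
    have hN1 : h (2 ^ K + 1) = t (2 ^ K + 1) * h (2 ^ K) + h (2 ^ K - 1) := by
      have := h_eq (2 ^ K + 1) (by omega)
      rwa [show 2 ^ K + 1 - 1 = 2 ^ K by omega, show 2 ^ K + 1 - 2 = 2 ^ K - 1 by omega] at this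
    have hN2 : h (2 ^ K + 2) = t (2 ^ K + 2) * h (2 ^ K + 1) + h (2 ^ K) := by
      have := h_eq (2 ^ K + 2) (by omega)
      rwa [show 2 ^ K + 2 - 1 = 2 ^ K + 1 by omega, show 2 ^ K + 2 - 2 = 2 ^ K by omega] at this
    rw [e0, e1, e2]
    rw [htN, hb1, hd1] at hN
    rw [htN1] at hN1
    rw [htN2] at hN2
    refine ⟨by linarith, by linarith, by linarith⟩
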